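/- Let $T$ be an increasing ordered tree with $k$ edges. Then for all $n\ge k+1$, every $n$-vertex ordered graph with more than $(k-1)n - \binom{k}{2}$ edges contains a copy of $T$. -/

import Mathlib

/-- Vertex set of an ordered-graph pattern given by its edge set. -/
def verts (E : Finset (ℕ × ℕ)) : Finset ℕ := E.image Prod.fst ∪ E.image Prod.snd

/-- An increasing (ordered) tree with its current longest edge (i,j). -/
inductive IncTree : Finset (ℕ × ℕ) → ℕ → ℕ → Prop
  | single (i j : ℕ) : i < j → IncTree {(i, j)} i j
  | right (E : Finset (ℕ × ℕ)) (i j j' : ℕ) :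
      IncTree E i j → j < j' → IncTree (insert (i, j') E) i j'
  | left (E : Finset (ℕ × ℕ)) (i j i' : ℕ) :
      IncTree E i j → i' < i → IncTree (insert (i', j) E) i' j

/-- Ordered containment of a pattern in an n-vertex ordered graph. -/
def OContains {n : ℕ} (G : SimpleGraph (Fin n)) (E : Finset (ℕ × ℕ)) : Prop :=
  ∃ f : ℕ → Fin n, (∀ a ∈ verts E, ∀ b ∈ verts E, a < b → f a < f b) ∧
    ∀ p ∈ E, G.Adj (f p.1) (f p.2)

lemma mem_verts {E : Finset (ℕ × ℕ)} {a : ℕ} :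
    a ∈ verts E ↔ ∃ p ∈ E, p.1 = a ∨ p.2 = a := by
  simp only [verts, Finset.mem_union, Finset.mem_image]
  constructor
  · rintro (⟨p, hp, h⟩ | ⟨p, hp, h⟩) <;> exact ⟨p, hp, by tauto⟩
  · rintro ⟨p, hp, h | h⟩
    · exact Or.inl ⟨p, hp, h⟩
    · exact Or.inr ⟨p, hp, h⟩

lemma verts_insert (a b : ℕ) (E : Finset (ℕ × ℕ)) :
    verts (insert (a, b) E) = insert a (insert b (verts E)) := by
  ext x
  simp only [mem_verts, Finset.mem_insert, Prod.exists]
  constructor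
  · rintro ⟨p, q, hpq | hpq, h⟩
    · rcases h with h | h <;> simp_all
    · rcases h with h | h
      · exact Or.inr (Or.inr ⟨p, q, hpq, Or.inl h⟩)
      · exact Or.inr (Or.inr ⟨p, q, hpq, Or.inr h⟩)
  · rintro (rfl | rfl | ⟨p, q, hpq, h⟩)
    · exact ⟨x, b, Or.inl rfl, Or.inl rfl⟩
    · exact ⟨a, x, Or.inl rfl, Or.inr rfl⟩
    · exact ⟨p, q, Or.inr hpq, h⟩

lemma IncTree.lt {E : Finset (ℕ × ℕ)} {i j : ℕ} (h : IncTree E i j) : i < j := by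
  induction h with
  | single i j h => exact h
  | right E i j j' h hj ih => exact ih.trans hj
  | left E i j i' h hi ih => exact hi.trans ih

lemma IncTree.mem {E : Finset (ℕ × ℕ)} {i j : ℕ} (h : IncTree E i j) : (i, j) ∈ E := by
  induction h with
  | single i j h => exact Finset.mem_singleton_self _
  | right E i j j' h hj ih => exact Finset.mem_insert_self _ _
  | left E i j i' h hi ih => exact Finset.mem_insert_self _ _

lemma IncTree.min_le {E : Finset (ℕ × ℕ)} {i j : ℕ} (h : IncTree E i j) :
    ∀ a ∈ verts E, i ≤ a := by
  induction h with
  | single i j h =>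
    intro a ha
    rw [show ({(i,j)} : Finset (ℕ × ℕ)) = insert (i,j) ∅ by simp, verts_insert] at ha
    simp only [Finset.mem_insert] at ha
    rcases ha with rfl | rfl | ha
    · rfl
    · exact h.le
    · simp [verts] at ha
  | right E i j j' h hj ih =>
    intro a ha
    rw [verts_insert] at ha
    simp only [Finset.mem_insert] at ha
    rcases ha with rfl | rfl | ha
    · rfl
    · exact (h.lt.trans hj).le
    · exact ih a ha
  | left E i j i' h hi ih =>
    intro a ha
    rw [verts_insert] at ha
    simp only [Finset.mem_insert] at ha
    rcases ha with rfl | rfl | ha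
    · rfl
    · exact (hi.trans h.lt).le
    · exact hi.le.trans (ih a ha)

lemma IncTree.le_max {E : Finset (ℕ × ℕ)} {i j : ℕ} (h : IncTree E i j) :
    ∀ a ∈ verts E, a ≤ j := by
  induction h with
  | single i j h =>
    intro a ha
    rw [show ({(i,j)} : Finset (ℕ × ℕ)) = insert (i,j) ∅ by simp, verts_insert] at ha
    simp only [Finset.mem_insert] at ha
    rcases ha with rfl | rfl | ha
    · exact h.le
    · rfl
    · simp [verts] at ha
  | right E i j j' h hj ih =>
    intro a ha
    rw [verts_insert] at ha
    simp only [Finset.mem_insert] at ha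
    rcases ha with rfl | rfl | ha
    · exact (h.lt.trans hj).le
    · rfl
    · exact (ih a ha).trans hj.le
  | left E i j i' h hi ih =>
    intro a ha
    rw [verts_insert] at ha
    simp only [Finset.mem_insert] at ha
    rcases ha with rfl | rfl | ha
    · exact (hi.trans h.lt).le
    · rfl
    · exact ih a ha

lemma IncTree.card_verts {E : Finset (ℕ × ℕ)} {i j : ℕ} (h : IncTree E i j) :
    (verts E).card = E.card + 1 := by
  induction h with
  | single i j h =>
    rw [show ({(i,j)} : Finset (ℕ × ℕ)) = insert (i,j) ∅ by simp, verts_insert]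
    simp [verts, Finset.card_insert_of_notMem, h.ne]
  | right E i j j' h hj ih =>
    have hjv : j' ∉ verts E := fun hv => absurd (h.le_max j' hv) (not_le.mpr hj)
    have hie : (i, j') ∉ E := fun he => hjv (mem_verts.mpr ⟨(i,j'), he, Or.inr rfl⟩)
    have hiv : i ∈ verts E := mem_verts.mpr ⟨(i,j), h.mem, Or.inl rfl⟩
    rw [verts_insert, Finset.insert_eq_self.mpr (Finset.mem_insert_of_mem hiv),
      Finset.card_insert_of_notMem hjv, Finset.card_insert_of_notMem hie, ih]
  | left E i j i' h hi ih =>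
    have hjv : i' ∉ verts E := fun hv => absurd (h.min_le i' hv) (not_le.mpr hi)
    have hie : (i', j) ∉ E := fun he => hjv (mem_verts.mpr ⟨(i',j), he, Or.inl rfl⟩)
    have hiv : j ∈ verts E := mem_verts.mpr ⟨(i,j), h.mem, Or.inr rfl⟩
    rw [verts_insert, Finset.insert_eq_self.mpr hiv,
      Finset.card_insert_of_notMem hjv, Finset.card_insert_of_notMem hie, ih]

lemma del_count {n : ℕ} (G : SimpleGraph (Fin n)) (D : Finset (Sym2 (Fin n))) :
    G.edgeSet.ncard ≤ (G.deleteEdges ↑D).edgeSet.ncard + D.card := by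
  have h1 : (G.deleteEdges ↑D).edgeSet = G.edgeSet \ ↑D := by
    simp [SimpleGraph.edgeSet_deleteEdges]
  have h2 : G.edgeSet ⊆ (G.edgeSet \ ↑D) ∪ ↑D := by
    intro e he
    by_cases hd : e ∈ (↑D : Set (Sym2 (Fin n)))
    · exact Or.inr hd
    · exact Or.inl ⟨he, hd⟩
  calc G.edgeSet.ncard ≤ ((G.edgeSet \ ↑D) ∪ ↑D).ncard :=
        Set.ncard_le_ncard h2 (Set.toFinite _)
    _ ≤ (G.edgeSet \ ↑D).ncard + (↑D : Set (Sym2 (Fin n))).ncard := Set.ncard_union_le _ _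
    _ = (G.deleteEdges ↑D).edgeSet.ncard + D.card := by rw [h1, Set.ncard_coe_finset]

lemma img_card_bounds {n c : ℕ} {S : Finset ℕ} (f : ℕ → Fin n)
    (hmono : ∀ a ∈ S, ∀ b ∈ S, a < b → f a < f b) {i j : ℕ}
    (hi : i ∈ S) (hmin : ∀ a ∈ S, i ≤ a) (hj : j ∈ S) (hmax : ∀ a ∈ S, a ≤ j)
    (hc : S.card = c) : (f i).val + c ≤ n ∧ c ≤ (f j).val + 1 := by
  have hinj : Set.InjOn (fun a => (f a).val) ↑S := by
    intro a ha b hb hab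
    by_contra hne
    rcases Nat.lt_or_ge a b with h | h
    · exact absurd hab (Nat.ne_of_lt (hmono a ha b hb h))
    · exact absurd hab.symm (Nat.ne_of_lt (hmono b hb a ha (lt_of_le_of_ne h (Ne.symm hne))))
  have hsub : S.image (fun a => (f a).val) ⊆ Finset.Ico (f i).val ((f j).val + 1) := by
    intro x hx
    rcases Finset.mem_image.mp hx with ⟨a, ha, rfl⟩
    rw [Finset.mem_Ico]
    constructor
    · rcases Nat.eq_or_lt_of_le (hmin a ha) with rfl | h
      · exact le_refl _
      · exact (hmono i hi a ha h).le
    · rcases Nat.eq_or_lt_of_le (hmax a ha) with rfl | h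
      · exact Nat.lt_succ_self _
      · exact Nat.lt_succ_of_lt (hmono a ha j hj h)
  have hcard : c ≤ (f j).val + 1 - (f i).val := by
    rw [← hc, ← Finset.card_image_of_injOn hinj, ← Nat.card_Ico]
    exact Finset.card_le_card hsub
  have hjn : (f j).val < n := (f j).isLt
  omega

lemma main_lemma {E : Finset (ℕ × ℕ)} {i j : ℕ} (hT : IncTree E i j) :
    ∀ n : ℕ, E.card + 1 ≤ n → ∀ G : SimpleGraph (Fin n),
      (E.card - 1) * n - E.card.choose 2 < G.edgeSet.ncard → OContains G E := by
  induction hT with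
  | single i j hij =>
    intro n hn G hG
    simp only [Finset.card_singleton] at hG
    have hne : G.edgeSet.Nonempty := by
      apply Set.nonempty_of_ncard_ne_zero
      omega
    obtain ⟨e, he⟩ := hne
    induction e using Sym2.ind with
    | _ a b =>
      rw [SimpleGraph.mem_edgeSet] at he
      have key : ∀ a b : Fin n, G.Adj a b → a < b → OContains G {(i, j)} := by
        intro a b hab hlt
        refine ⟨fun x => if x = i then a else b, ?_, ?_⟩
        · intro x hx y hy hxy
          rw [show ({(i,j)} : Finset (ℕ × ℕ)) = insert (i,j) ∅ by simp, verts_insert] at hx hy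
          simp only [Finset.mem_insert] at hx hy
          have hv : verts (∅ : Finset (ℕ × ℕ)) = ∅ := by simp [verts]
          rw [hv] at hx hy
          simp only [Finset.notMem_empty, or_false] at hx hy
          rcases hx with rfl | rfl <;> rcases hy with rfl | rfl <;> try omega
          simp only [if_pos rfl, if_neg (Nat.ne_of_gt hij)]
          exact hlt
        · intro p hp
          rw [Finset.mem_singleton] at hp
          subst hp
          simpa [if_pos, if_neg (Nat.ne_of_gt hij)] using hab
      rcases lt_or_gt_of_ne (G.ne_of_adj he) with h | h
      · exact key a b he h
      · exact key b a he.symm h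
  | right E i j j' hT' hj ih =>
    classical
    intro n hn G hG
    have hij : i < j := hT'.lt
    have hjv : j' ∉ verts E := fun hv => absurd (hT'.le_max j' hv) (not_le.mpr hj)
    have hie : (i, j') ∉ E := fun he => hjv (mem_verts.mpr ⟨(i,j'), he, Or.inr rfl⟩)
    have hcard : (insert (i, j') E).card = E.card + 1 := Finset.card_insert_of_notMem hie
    set c := E.card with hc
    clear_value c
    have hc1 : 1 ≤ c := by rw [hc]; exact Finset.card_pos.mpr ⟨(i,j), hT'.mem⟩
    rw [hcard] at hn hG
    -- deletion setup
    set upSet : Fin n → Finset (Fin n) :=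
      fun v => Finset.univ.filter (fun w => G.Adj v w ∧ v < w) with hup
    set top : Fin n → Fin n :=
      fun v => if h : (upSet v).Nonempty then (upSet v).max' h else v with htop
    set D : Finset (Sym2 (Fin n)) :=
      (Finset.univ.filter (fun v : Fin n => (v : ℕ) + c + 1 ≤ n)).image
        (fun v => s(v, top v)) with hD
    have hDcard : D.card ≤ n - c := by
      refine le_trans (Finset.card_image_le) (le_trans ?_ (le_of_eq (Finset.card_range (n - c))))
      refine Finset.card_le_card_of_injOn (fun v => (v : ℕ)) ?_ ?_
      · intro v hv
        simp only [Finset.mem_coe, Finset.mem_filter] at hv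
        simp only [Finset.mem_coe, Finset.mem_range]
        omega
      · intro v _ w _ h
        exact Fin.ext h
    set G' := G.deleteEdges ↑D with hG'
    have hcnt : G.edgeSet.ncard ≤ G'.edgeSet.ncard + D.card := del_count G D
    have hG'b : (c - 1) * n - c.choose 2 < G'.edgeSet.ncard := by
      obtain ⟨d, rfl⟩ : ∃ d, c = d + 1 := ⟨c - 1, by omega⟩
      have e1 : (d + 1 + 1).choose 2 = (d + 1).choose 2 + (d + 1) := by
        have h0 : (d + 1 + 1).choose 2 = (d + 1).choose 1 + (d + 1).choose 2 := rfl
        rw [h0, Nat.choose_one_right, Nat.add_comm]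
      have e2 : (d + 1 + 1 - 1) * n = d * n + n := by
        have h11 : d + 1 + 1 - 1 = d + 1 := by omega
        rw [h11]; ring
      have e3 : (d + 1 - 1) * n = d * n := by rw [Nat.add_sub_cancel]
      have e4 : (d + 1).choose 2 ≤ d * n := by
        rw [Nat.choose_two_right]
        simp only [Nat.add_sub_cancel]
        calc (d + 1) * d / 2 ≤ (d + 1) * d := Nat.div_le_self _ _
          _ = d * (d + 1) := Nat.mul_comm _ _
          _ ≤ d * n := Nat.mul_le_mul_left d (by omega)
      omega
    obtain ⟨f, hmono, hadj⟩ := ih n (by omega) G' hG'b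
    -- facts about the embedding
    have hiv : i ∈ verts E := mem_verts.mpr ⟨(i,j), hT'.mem, Or.inl rfl⟩
    have hjv2 : j ∈ verts E := mem_verts.mpr ⟨(i,j), hT'.mem, Or.inr rfl⟩
    obtain ⟨hlow, _⟩ := img_card_bounds f hmono hiv hT'.min_le hjv2 hT'.le_max
      (by rw [hT'.card_verts, ← hc])
    have hadj_ij : G'.Adj (f i) (f j) := hadj (i, j) hT'.mem
    have hfij : f i < f j := hmono i hiv j hjv2 hT'.lt
    have hGij : G.Adj (f i) (f j) := (G.deleteEdges_le ↑D) hadj_ij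
    have hmem : f j ∈ upSet (f i) := by
      rw [hup]; simp only [Finset.mem_filter, Finset.mem_univ, true_and]
      exact ⟨hGij, hfij⟩
    have hne : (upSet (f i)).Nonempty := ⟨f j, hmem⟩
    set w := top (f i) with hw
    have hwmem : w ∈ upSet (f i) := by rw [hw, htop]; simp only [dif_pos hne]; exact Finset.max'_mem _ _
    have hwadj : G.Adj (f i) w ∧ f i < w := by
      have := hwmem; rw [hup] at this
      simpa using this
    have hwge : f j ≤ w := by
      rw [hw, htop]; simp only [dif_pos hne]; exact Finset.le_max' _ _ hmem
    have hwD : s(f i, w) ∈ D := by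
      rw [hD]
      apply Finset.mem_image_of_mem
      simp only [Finset.mem_filter, Finset.mem_univ, true_and]
      omega
    have hwne : f j ≠ w := by
      intro hEq
      have : s(f i, f j) ∉ (↑D : Set (Sym2 (Fin n))) := by
        rw [hG', SimpleGraph.deleteEdges_adj] at hadj_ij
        exact hadj_ij.2
      rw [hEq] at this
      exact this hwD
    have hwgt : f j < w := lt_of_le_of_ne hwge hwne
    -- build embedding
    refine ⟨Function.update f j' w, ?_, ?_⟩
    · intro a ha b hb hab
      rw [verts_insert] at ha hb
      simp only [Finset.mem_insert] at ha hb
      have ha' : a = j' ∨ a ∈ verts E := by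
        rcases ha with h|h|h
        · exact Or.inr (by rw [h]; exact hiv)
        · exact Or.inl h
        · exact Or.inr h
      have hb' : b = j' ∨ b ∈ verts E := by
        rcases hb with h|h|h
        · exact Or.inr (by rw [h]; exact hiv)
        · exact Or.inl h
        · exact Or.inr h
      rcases hb' with hbj' | hbE
      · subst hbj'
        rcases ha' with haj' | haE
        · omega
        · have haj : a ≠ b := fun h => hjv (by rw [← h]; exact haE)
          rw [Function.update_of_ne haj, Function.update_self]
          have hfa : f a ≤ f j := by
            rcases Nat.eq_or_lt_of_le (hT'.le_max a haE) with rfl | h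
            · exact le_refl _
            · exact (hmono a haE j hjv2 h).le
          exact lt_of_le_of_lt hfa hwgt
      · have hbj : b ≠ j' := fun h => hjv (by rw [← h]; exact hbE)
        have haE : a ∈ verts E := by
          rcases ha' with h | h
          · exact absurd (hT'.le_max b hbE) (by omega)
          · exact h
        have haj : a ≠ j' := fun h => hjv (by rw [← h]; exact haE)
        rw [Function.update_of_ne haj, Function.update_of_ne hbj]
        exact hmono a haE b hbE hab
    · intro p hp
      rcases Finset.mem_insert.mp hp with rfl | hpE
      · simp only
        rw [Function.update_self, Function.update_of_ne (by omega : i ≠ j')]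
        exact hwadj.1
      · have h1 : p.1 ∈ verts E := mem_verts.mpr ⟨p, hpE, Or.inl rfl⟩
        have h2 : p.2 ∈ verts E := mem_verts.mpr ⟨p, hpE, Or.inr rfl⟩
        rw [Function.update_of_ne (fun h => hjv (by rw [← h]; exact h1)),
          Function.update_of_ne (fun h => hjv (by rw [← h]; exact h2))]
        exact (G.deleteEdges_le ↑D) (hadj p hpE)
  | left E i j i' hT' hi ih =>
    classical
    intro n hn G hG
    have hij : i < j := hT'.lt
    have hjv : i' ∉ verts E := fun hv => absurd (hT'.min_le i' hv) (not_le.mpr hi)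
    have hie : (i', j) ∉ E := fun he => hjv (mem_verts.mpr ⟨(i',j), he, Or.inl rfl⟩)
    have hcard : (insert (i', j) E).card = E.card + 1 := Finset.card_insert_of_notMem hie
    set c := E.card with hc
    clear_value c
    have hc1 : 1 ≤ c := by rw [hc]; exact Finset.card_pos.mpr ⟨(i,j), hT'.mem⟩
    rw [hcard] at hn hG
    set downSet : Fin n → Finset (Fin n) :=
      fun v => Finset.univ.filter (fun w => G.Adj v w ∧ w < v) with hup
    set bot : Fin n → Fin n :=
      fun v => if h : (downSet v).Nonempty then (downSet v).min' h else v with htop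
    set D : Finset (Sym2 (Fin n)) :=
      (Finset.univ.filter (fun v : Fin n => c ≤ (v : ℕ))).image
        (fun v => s(v, bot v)) with hD
    have hDcard : D.card ≤ n - c := by
      refine le_trans (Finset.card_image_le) (le_trans ?_ (le_of_eq (Finset.card_range (n - c))))
      refine Finset.card_le_card_of_injOn (fun v => (v : ℕ) - c) ?_ ?_
      · intro v hv
        simp only [Finset.mem_coe, Finset.mem_filter] at hv
        simp only [Finset.mem_coe, Finset.mem_range]
        have := v.isLt
        omega
      · intro v hv w hw h
        simp only [Finset.coe_filter, Set.mem_setOf_eq, Finset.mem_univ, true_and] at hv hw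
        have h' : (v : ℕ) - c = (w : ℕ) - c := h
        exact Fin.ext (by omega)
    set G' := G.deleteEdges ↑D with hG'
    have hcnt : G.edgeSet.ncard ≤ G'.edgeSet.ncard + D.card := del_count G D
    have hG'b : (c - 1) * n - c.choose 2 < G'.edgeSet.ncard := by
      obtain ⟨d, rfl⟩ : ∃ d, c = d + 1 := ⟨c - 1, by omega⟩
      have e1 : (d + 1 + 1).choose 2 = (d + 1).choose 2 + (d + 1) := by
        have h0 : (d + 1 + 1).choose 2 = (d + 1).choose 1 + (d + 1).choose 2 := rfl
        rw [h0, Nat.choose_one_right, Nat.add_comm]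
      have e2 : (d + 1 + 1 - 1) * n = d * n + n := by
        have h11 : d + 1 + 1 - 1 = d + 1 := by omega
        rw [h11]; ring
      have e3 : (d + 1 - 1) * n = d * n := by rw [Nat.add_sub_cancel]
      have e4 : (d + 1).choose 2 ≤ d * n := by
        rw [Nat.choose_two_right]
        simp only [Nat.add_sub_cancel]
        calc (d + 1) * d / 2 ≤ (d + 1) * d := Nat.div_le_self _ _
          _ = d * (d + 1) := Nat.mul_comm _ _
          _ ≤ d * n := Nat.mul_le_mul_left d (by omega)
      omega
    obtain ⟨f, hmono, hadj⟩ := ih n (by omega) G' hG'b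
    have hiv : i ∈ verts E := mem_verts.mpr ⟨(i,j), hT'.mem, Or.inl rfl⟩
    have hjv2 : j ∈ verts E := mem_verts.mpr ⟨(i,j), hT'.mem, Or.inr rfl⟩
    obtain ⟨_, hhigh⟩ := img_card_bounds f hmono hiv hT'.min_le hjv2 hT'.le_max
      (by rw [hT'.card_verts, ← hc])
    have hadj_ij : G'.Adj (f i) (f j) := hadj (i, j) hT'.mem
    have hfij : f i < f j := hmono i hiv j hjv2 hT'.lt
    have hGij : G.Adj (f i) (f j) := (G.deleteEdges_le ↑D) hadj_ij
    have hmem : f i ∈ downSet (f j) := by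
      rw [hup]; simp only [Finset.mem_filter, Finset.mem_univ, true_and]
      exact ⟨hGij.symm, hfij⟩
    have hne : (downSet (f j)).Nonempty := ⟨f i, hmem⟩
    set w := bot (f j) with hw
    have hwmem : w ∈ downSet (f j) := by
      rw [hw, htop]; simp only [dif_pos hne]; exact Finset.min'_mem _ _
    have hwadj : G.Adj (f j) w ∧ w < f j := by
      have := hwmem; rw [hup] at this
      simpa using this
    have hwge : w ≤ f i := by
      rw [hw, htop]; simp only [dif_pos hne]; exact Finset.min'_le _ _ hmem
    have hwD : s(f j, w) ∈ D := by
      rw [hD]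
      apply Finset.mem_image_of_mem
      simp only [Finset.mem_filter, Finset.mem_univ, true_and]
      omega
    have hwne : w ≠ f i := by
      intro hEq
      have hnot : s(f i, f j) ∉ (↑D : Set (Sym2 (Fin n))) := by
        rw [hG', SimpleGraph.deleteEdges_adj] at hadj_ij
        exact hadj_ij.2
      apply hnot
      have : s(f i, f j) = s(f j, w) := by rw [← hEq]; exact Sym2.eq_swap
      rw [this]
      exact hwD
    have hwgt : w < f i := lt_of_le_of_ne hwge hwne
    refine ⟨Function.update f i' w, ?_, ?_⟩
    · intro a ha b hb hab
      rw [verts_insert] at ha hb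
      simp only [Finset.mem_insert] at ha hb
      have ha' : a = i' ∨ a ∈ verts E := by
        rcases ha with h|h|h
        · exact Or.inl h
        · exact Or.inr (by rw [h]; exact hjv2)
        · exact Or.inr h
      have hb' : b = i' ∨ b ∈ verts E := by
        rcases hb with h|h|h
        · exact Or.inl h
        · exact Or.inr (by rw [h]; exact hjv2)
        · exact Or.inr h
      rcases ha' with hai' | haE
      · subst hai'
        rcases hb' with hbi' | hbE
        · omega
        · have hbj : b ≠ a := fun h => hjv (by rw [← h]; exact hbE)
          rw [Function.update_of_ne hbj, Function.update_self]
          have hfb : f i ≤ f b := by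
            rcases Nat.eq_or_lt_of_le (hT'.min_le b hbE) with h | h
            · rw [← h]
            · exact (hmono i hiv b hbE h).le
          exact lt_of_lt_of_le hwgt hfb
      · have haj : a ≠ i' := fun h => hjv (h ▸ haE)
        have hbE : b ∈ verts E := by
          rcases hb' with h | h
          · exact absurd (hT'.min_le a haE) (by omega)
          · exact h
        have hbj : b ≠ i' := fun h => hjv (by rw [← h]; exact hbE)
        rw [Function.update_of_ne haj, Function.update_of_ne hbj]
        exact hmono a haE b hbE hab
    · intro p hp
      rcases Finset.mem_insert.mp hp with rfl | hpE
      · simp only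
        rw [Function.update_self, Function.update_of_ne (by omega : j ≠ i')]
        exact hwadj.1.symm
      · have h1 : p.1 ∈ verts E := mem_verts.mpr ⟨p, hpE, Or.inl rfl⟩
        have h2 : p.2 ∈ verts E := mem_verts.mpr ⟨p, hpE, Or.inr rfl⟩
        rw [Function.update_of_ne (fun h => hjv (by rw [← h]; exact h1)),
          Function.update_of_ne (fun h => hjv (by rw [← h]; exact h2))]
        exact (G.deleteEdges_le ↑D) (hadj p hpE)

/-- For an increasing tree T with k edges and n ≥ k+1, every n-vertex
ordered graph with more than (k-1)n - C(k,2) edges contains a copy of T. -/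
theorem stmt_7 (k n : ℕ) (E : Finset (ℕ × ℕ)) (i j : ℕ)
    (hT : IncTree E i j) (hk : E.card = k) (hn : k + 1 ≤ n) :
    ∀ G : SimpleGraph (Fin n), (k - 1) * n - k.choose 2 < G.edgeSet.ncard →
      OContains G E := by
  subst hk
  intro G hG
  exact main_lemma hT n hn G hG
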